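/- If x₀ ∈ C and h(x(t)) satisfies ḣ(x(t)) ≥ -α(h(x(t))) for all t ≥ t₀ where α is a locally Lipschitz class-K function, then h(x(t)) ≥ 0 for all t ≥ t₀, i.e., the set C = {x : h(x) ≥ 0} is forward invariant. -/
import Mathlib


/-- If x₀ ∈ C and ḣ(x(t)) ≥ -α(h(x(t))) for all t ≥ t₀, with α a
locally Lipschitz class-K function, then h(x(t)) ≥ 0 for all t ≥ t₀
(forward invariance of C = {x : h(x) ≥ 0}). -/
theorem forward_invariance_comparison
    {n : ℕ} (h : EuclideanSpace ℝ (Fin n) → ℝ) (hh : ContDiff ℝ 1 h)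
    (x : ℝ → EuclideanSpace ℝ (Fin n)) (hx : ContDiff ℝ 1 x)
    (α : ℝ → ℝ) (hα_lip : LocallyLipschitz α) (hα_mono : StrictMono α)
    (hα_cont : Continuous α) (hα0 : α 0 = 0)
    (t₀ : ℝ) (hinit : h (x t₀) ≥ 0)
    (hineq : ∀ t ≥ t₀, deriv (fun s => h (x s)) t ≥ -α (h (x t))) :
    ∀ t ≥ t₀, h (x t) ≥ 0 := by
  intro t₁ ht₁
  by_contra hneg
  push_neg at hneg
  set y : ℝ → ℝ := fun s => h (x s) with hy
  have hycont : Continuous y := hh.continuous.comp hx.continuous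
  set S : Set ℝ := Set.Icc t₀ t₁ ∩ {t | 0 ≤ y t} with hS
  have hSne : S.Nonempty := ⟨t₀, ⟨le_refl _, ht₁⟩, hinit⟩
  have hSclosed : IsClosed S :=
    isClosed_Icc.inter (isClosed_le continuous_const hycont)
  have hSbdd : BddAbove S := ⟨t₁, fun t ht => ht.1.2⟩
  set s := sSup S with hs
  have hsS : s ∈ S := hSclosed.csSup_mem hSne hSbdd
  have hst₁ : s ≤ t₁ := hsS.1.2
  have hst₀ : t₀ ≤ s := hsS.1.1
  have hys : 0 ≤ y s := hsS.2
  have hsne : s ≠ t₁ := by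
    intro hcon
    rw [hcon] at hys
    exact absurd hneg (not_lt.mpr hys)
  have hslt : s < t₁ := lt_of_le_of_ne hst₁ hsne
  -- on (s, t₁], y is negative
  have hynegOn : ∀ t, s < t → t ≤ t₁ → y t < 0 := by
    intro t hts htt₁
    by_contra hcon
    push_neg at hcon
    have : t ∈ S := ⟨⟨le_trans hst₀ hts.le, htt₁⟩, hcon⟩
    exact absurd (le_csSup hSbdd this) (not_le.mpr hts)
  -- y is strictly monotone on [s, t₁]
  have hmono : StrictMonoOn y (Set.Icc s t₁) := by
    apply strictMonoOn_of_deriv_pos (convex_Icc s t₁) (hycont.continuousOn)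
    intro t ht
    rw [interior_Icc] at ht
    have hyt : y t < 0 := hynegOn t ht.1 ht.2.le
    have hαyt : α (y t) < 0 := by
      have := hα_mono hyt
      rwa [hα0] at this
    have := hineq t (le_trans hst₀ ht.1.le)
    calc (0:ℝ) < -α (y t) := by linarith
      _ ≤ deriv (fun s => h (x s)) t := this
  have : y s < y t₁ :=
    hmono ⟨le_refl _, hst₁⟩ ⟨hst₁, le_refl _⟩ hslt
  linarith
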